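/- Let G = GP(Γ, 𝒢) be a graph product of groups over a finite simple graph Γ, let 𝒮 be a collection of subsets of V(Γ), and for each S ⊆ V(Γ) let G_S denote the subgroup of G generated by the vertex groups of vertices in S. Then ⋂_{S ∈ 𝒮} G_S = G_T where T = ⋂_{S ∈ 𝒮} S. -/

import Mathlib

section GraphProduct

variable {V : Type} [Fintype V] (Γ : SimpleGraph V) (Gv : V → Type) [∀ v, Group (Gv v)]

/-- The commutation relators defining a graph product: for each edge `{u, v}` of `Γ`,
the elements of `G_u` commute with the elements of `G_v` inside the free product. -/
def graphProductRels : Set (Monoid.CoprodI Gv) :=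
  {x | ∃ (u v : V), Γ.Adj u v ∧ ∃ (a : Gv u) (b : Gv v),
    x = Monoid.CoprodI.of a * Monoid.CoprodI.of b *
      (Monoid.CoprodI.of a)⁻¹ * (Monoid.CoprodI.of b)⁻¹}

/-- The graph product of the groups `Gv` over the finite simple graph `Γ`: the free
product of the vertex groups modulo commutation of adjacent vertex groups. -/
def GraphProduct : Type :=
  Monoid.CoprodI Gv ⧸ Subgroup.normalClosure (graphProductRels Γ Gv)

instance : Group (GraphProduct Γ Gv) :=
  inferInstanceAs (Group (Monoid.CoprodI Gv ⧸ Subgroup.normalClosure (graphProductRels Γ Gv)))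

/-- The canonical map of a vertex group into the graph product. -/
def GraphProduct.of (v : V) : Gv v →* GraphProduct Γ Gv :=
  (QuotientGroup.mk' _).comp Monoid.CoprodI.of

/-- The full subgroup on a set `S` of vertices: the subgroup generated by the vertex
groups of the vertices in `S`. -/
def GraphProduct.full (S : Set V) : Subgroup (GraphProduct Γ Gv) :=
  ⨆ v ∈ S, (GraphProduct.of Γ Gv v).range

/-- A graph product is non-degenerate if all vertex groups are nontrivial and `Γ` has
more than one vertex. -/
def GraphProduct.NonDegenerate : Prop :=
  (∀ v, Nontrivial (Gv v)) ∧ Nontrivial V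

/-- The conjugate `g H g⁻¹` of a subgroup. -/
def conjSubgroup {G : Type*} [Group G] (g : G) (H : Subgroup G) : Subgroup G :=
  H.map (MulAut.conj g).toMonoidHom

/-- Edge distance at least `n` between two vertices of a graph (with the convention
that vertices in different components are at infinite distance). -/
def SimpleGraph.distAtLeast (n : ℕ) (a b : V) : Prop :=
  a ≠ b ∧ (¬ Γ.Reachable a b ∨ n ≤ Γ.dist a b)

/-- Two vertices are separated (w.r.t. the graph product) if their edge distance is at
least 2 and the full subgroup on the intersection of their links is finite. -/
def GraphProduct.SeparatedPair (a b : V) : Prop :=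
  a ≠ b ∧ ¬ Γ.Adj a b ∧
    Finite (GraphProduct.full Γ Gv (Γ.neighborSet a ∩ Γ.neighborSet b))

/-- The graph-theoretic diameter of `Γ` is at least `n`. -/
def SimpleGraph.diamAtLeast (n : ℕ) : Prop := ∃ a b : V, Γ.distAtLeast n a b

end GraphProduct

section Retract

open Monoid

variable {V : Type} [Fintype V] (Γ : SimpleGraph V) (Gv : V → Type) [∀ v, Group (Gv v)]

open scoped Classical in
/-- The retraction onto the full subgroup on `S`, as an endomorphism. -/
noncomputable def GraphProduct.retract (S : Set V) : GraphProduct Γ Gv →* GraphProduct Γ Gv := by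
  refine QuotientGroup.lift _
    (CoprodI.lift (fun v => if h : v ∈ S then GraphProduct.of Γ Gv v else 1)) ?_
  refine Subgroup.normalClosure_le_normal ?_
  rintro x ⟨u, v, huv, a, b, rfl⟩
  simp only [SetLike.mem_coe, MonoidHom.mem_ker, map_mul, map_inv, CoprodI.lift_of]
  by_cases hu : u ∈ S
  on_goal 2 => simp [dif_neg hu]
  by_cases hv : v ∈ S
  on_goal 2 => simp [dif_neg hv]
  simp only [dif_pos hu, dif_pos hv]
  show GraphProduct.of Γ Gv u a * GraphProduct.of Γ Gv v b * (GraphProduct.of Γ Gv u a)⁻¹ *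
      (GraphProduct.of Γ Gv v b)⁻¹ = 1
  have h1 : ((Monoid.CoprodI.of a * Monoid.CoprodI.of b * (Monoid.CoprodI.of a)⁻¹ *
      (Monoid.CoprodI.of b)⁻¹ : Monoid.CoprodI Gv)) ∈
      Subgroup.normalClosure (graphProductRels Γ Gv) :=
    Subgroup.subset_normalClosure ⟨u, v, huv, a, b, rfl⟩
  have h2 : QuotientGroup.mk' (Subgroup.normalClosure (graphProductRels Γ Gv))
      (CoprodI.of a * CoprodI.of b * (CoprodI.of a)⁻¹ * (CoprodI.of b)⁻¹) = 1 := by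
    rw [QuotientGroup.mk'_apply, QuotientGroup.eq_one_iff]; exact h1
  exact h2

open scoped Classical in
theorem GraphProduct.retract_of (S : Set V) (v : V) (a : Gv v) :
    GraphProduct.retract Γ Gv S (GraphProduct.of Γ Gv v a) =
      if v ∈ S then GraphProduct.of Γ Gv v a else 1 := by
  show QuotientGroup.lift _ _ _ (QuotientGroup.mk' _ (CoprodI.of a)) = _
  rw [QuotientGroup.mk'_apply, QuotientGroup.lift_mk, CoprodI.lift_of]
  split_ifs with h <;> simp [dif_pos, dif_neg, h]

theorem GraphProduct.retract_fix {S : Set V} {g : GraphProduct Γ Gv}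
    (hg : g ∈ GraphProduct.full Γ Gv S) : GraphProduct.retract Γ Gv S g = g := by
  have : GraphProduct.full Γ Gv S ≤
      MonoidHom.eqLocus (GraphProduct.retract Γ Gv S) (MonoidHom.id _) := by
    refine iSup₂_le fun v hv => ?_
    rintro x ⟨a, rfl⟩
    show GraphProduct.retract Γ Gv S (GraphProduct.of Γ Gv v a) = GraphProduct.of Γ Gv v a
    rw [GraphProduct.retract_of, if_pos hv]
  exact this hg

theorem GraphProduct.retract_mem {S T : Set V} {g : GraphProduct Γ Gv}
    (hg : g ∈ GraphProduct.full Γ Gv T) :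
    GraphProduct.retract Γ Gv S g ∈ GraphProduct.full Γ Gv (S ∩ T) := by
  have : GraphProduct.full Γ Gv T ≤
      (GraphProduct.full Γ Gv (S ∩ T)).comap (GraphProduct.retract Γ Gv S) := by
    refine iSup₂_le fun v hv => ?_
    rintro x ⟨a, rfl⟩
    simp only [Subgroup.mem_comap, GraphProduct.retract_of]
    split_ifs with h
    · exact Subgroup.mem_iSup_of_mem v (Subgroup.mem_iSup_of_mem ⟨h, hv⟩ ⟨a, rfl⟩)
    · exact one_mem _
  exact this hg

theorem GraphProduct.full_univ : GraphProduct.full Γ Gv (Set.univ) = ⊤ := by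
  rw [eq_top_iff]
  rintro g -
  obtain ⟨x, rfl⟩ := QuotientGroup.mk'_surjective _ g
  induction x using Monoid.CoprodI.induction_on with
  | one => exact one_mem _
  | of v a => exact Subgroup.mem_iSup_of_mem v (Subgroup.mem_iSup_of_mem (Set.mem_univ v) ⟨a, rfl⟩)
  | mul x y hx hy => rw [map_mul]; exact mul_mem hx hy

theorem GraphProduct.full_inter (S T : Set V) :
    GraphProduct.full Γ Gv S ⊓ GraphProduct.full Γ Gv T = GraphProduct.full Γ Gv (S ∩ T) := by
  apply le_antisymm
  · rintro g ⟨hgS, hgT⟩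
    have := GraphProduct.retract_mem Γ Gv (S := S) hgT
    rwa [GraphProduct.retract_fix Γ Gv hgS] at this
  · refine le_inf ?_ ?_
    · exact iSup₂_le fun v hv => le_iSup₂_of_le v hv.1 le_rfl
    · exact iSup₂_le fun v hv => le_iSup₂_of_le v hv.2 le_rfl

end Retract

/-- In a graph product, the intersection of an arbitrary collection of full subgroups
is the full subgroup on the intersection of the corresponding vertex sets. -/
theorem full_subgroups_inf {V : Type} [Fintype V] (Γ : SimpleGraph V) (Gv : V → Type)
    [∀ v, Group (Gv v)] (𝒮 : Set (Set V)) :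
    (⨅ S ∈ 𝒮, GraphProduct.full Γ Gv S) = GraphProduct.full Γ Gv (⋂₀ 𝒮) := by
  refine Set.Finite.induction_on (motive := fun 𝒮 _ => (⨅ S ∈ 𝒮, GraphProduct.full Γ Gv S) = GraphProduct.full Γ Gv (⋂₀ 𝒮)) 𝒮 (Set.toFinite 𝒮) ?_ ?_
  · rw [iInf_emptyset, Set.sInter_empty, GraphProduct.full_univ]
  · intro a s _ _ ih
    rw [iInf_insert, Set.sInter_insert, ih, GraphProduct.full_inter]
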